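/- arXiv:2302.01009 — 6 statements merged into one kernel-verified Lean document; each statement's English description precedes it below -/
import Mathlib

section
/- The function f maps V into V: for every tuple v = (a,b,c,d) satisfying conditions I–III, the tuple f(v) also satisfies conditions I–III. -/
/-- Conditions I-III defining the set V of 4-tuples (a,b,c,d). -/
def inV : ℕ × ℕ × ℕ × ℕ → Prop :=
  fun ⟨a, b, c, d⟩ =>
    (∃ k, c = 2 ^ k) ∧ (d = 0 ∨ d = 1) ∧ (a > 0 → b = 0 → c > 1) ∧ (a = 0 → c = 1)

open Classical in
/-- The function f defined by the six rules. -/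
noncomputable def f : ℕ × ℕ × ℕ × ℕ → ℕ × ℕ × ℕ × ℕ :=
  fun ⟨a, b, c, d⟩ =>
    if d = 0 then
      if a > 0 then
        if b > 0 then (a, b - 1, 2 * c, 0)
        else (a - 1, c, 1, 0)
      else (0, b + 1, 1, 1)
    else
      if c > 1 then (a, b + 1, c / 2, 1)
      else if ∃ k > 0, b = 2 ^ k then (a + 1, 0, b, 1)
      else (a, b, 1, 0)

theorem stmt_0 : ∀ v : ℕ × ℕ × ℕ × ℕ, inV v → inV (f v) := by
  rintro ⟨a, b, c, d⟩ ⟨⟨k, hk⟩, hd, h3, h4⟩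
  simp only [f, inV]
  split_ifs with hd0 ha hb hc hpow
  · -- rule 1
    refine ⟨⟨k + 1, by rw [hk]; ring⟩, Or.inl rfl, ?_, ?_⟩
    · intro _ _
      have : c ≥ 1 := by rw [hk]; exact Nat.one_le_two_pow
      omega
    · omega
  · -- rule 2
    refine ⟨⟨0, rfl⟩, Or.inl rfl, ?_, fun _ => rfl⟩
    intro _ hc0
    have : c ≥ 1 := by rw [hk]; exact Nat.one_le_two_pow
    omega
  · -- rule 3
    exact ⟨⟨0, rfl⟩, Or.inr rfl, by omega, fun _ => rfl⟩
  · -- rule 4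
    refine ⟨⟨k - 1, ?_⟩, Or.inr rfl, fun _ h => by simp at h, ?_⟩
    · have hk1 : k ≥ 1 := by
        by_contra h
        interval_cases k <;> simp_all
      rw [hk]
      rw [show k = (k - 1) + 1 from by omega, pow_succ]
      exact Nat.mul_div_cancel _ (by norm_num)
    · intro h0
      exact absurd (h4 h0) (by omega)
  · -- rule 5
    obtain ⟨j, hj, hb2⟩ := hpow
    refine ⟨⟨j, hb2⟩, Or.inr rfl, ?_, fun h => by simp at h⟩
    intro _ _
    rw [hb2]
    exact Nat.one_lt_two_pow_iff.mpr (by omega)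
  · -- rule 6
    refine ⟨⟨0, rfl⟩, Or.inl rfl, ?_, ?_⟩
    · intro ha0 hb0
      have := h3 ha0 hb0
      omega
    · intro _; rfl
end

section
/- The function f : V → V is injective: for all u, v ∈ V, if f(u) = f(v) then u = v. -/
theorem stmt_1 : ∀ u v : ℕ × ℕ × ℕ × ℕ, inV u → inV v → f u = f v → u = v := by
  rintro ⟨a, b, c, d⟩ ⟨a', b', c', d'⟩ ⟨⟨k, rfl⟩, hd, h3, h4⟩ ⟨⟨k', rfl⟩, hd', h3', h4'⟩ h
  have pk : 0 < 2 ^ k := Nat.pow_pos (by norm_num)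
  have pk' : 0 < 2 ^ k' := Nat.pow_pos (by norm_num)
  have lk : 1 < 2 ^ k ↔ k ≠ 0 := Nat.one_lt_two_pow_iff
  have lk' : 1 < 2 ^ k' ↔ k' ≠ 0 := Nat.one_lt_two_pow_iff
  have inj : ∀ m n : ℕ, 2 ^ m = 2 ^ n → m = n :=
    fun m n h => Nat.pow_right_injective (le_refl 2) h
  simp only [f] at h
  split_ifs at h with h1 h2 h3a h4a h5 h6 h7 h8 h9 h10 h11 h12 h13 h14 h15 h16 h17 h18 <;>
    simp only [Prod.mk.injEq] at h ⊢ <;>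
    try omega
  -- Case: rule 2 (u) vs rule 6 (v)
  · exact absurd ⟨k, Nat.pos_of_ne_zero (lk.mp (h3 h2 (by omega))), h.2.1.symm⟩ h13
  -- Case: rule 4 vs rule 4
  · rename_i hck hd9 hck'
    have hk0 : k ≠ 0 := lk.mp hck
    have hk0' : k' ≠ 0 := lk'.mp hck'
    have e1 : 2 ^ k = 2 ^ (k - 1) * 2 := by rw [← pow_succ]; congr 1; omega
    have e1' : 2 ^ k' = 2 ^ (k' - 1) * 2 := by rw [← pow_succ]; congr 1; omega
    have d1 : 2 ^ k / 2 = 2 ^ (k - 1) := by rw [e1, Nat.mul_div_cancel _ (by norm_num)]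
    have d1' : 2 ^ k' / 2 = 2 ^ (k' - 1) := by rw [e1', Nat.mul_div_cancel _ (by norm_num)]
    have := inj _ _ (d1 ▸ d1' ▸ h.2.2.1)
    have hkk : k = k' := by omega
    subst hkk
    omega
  -- Case: rule 6 (u) vs rule 2 (v)
  · rename_i hck hbex hd0 ha0 hb0
    exact absurd ⟨k', Nat.pos_of_ne_zero (lk'.mp (h3' ha0 (by omega))), h.2.1⟩ hbex
end

section
/- For every tuple of the form v = (0, 2^m, 1, 1) ∈ V with 2^m not a tower of exponents (i.e., 2^m ∉ {T(h) : h ≥ 0}), there exists an integer n ≥ 0 such that the n-th iterate f^n(v) = (0, 2^{m+1}, 1, 1). -/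
/-- The tower function: T 0 = 1, T (h+1) = 2 ^ T h. -/
def T : ℕ → ℕ
  | 0 => 1
  | h + 1 => 2 ^ T h


lemma f1 {a b : ℕ} (c : ℕ) (ha : 0 < a) (hb : 0 < b) :
    f (a, b, c, 0) = (a, b - 1, 2 * c, 0) := by simp [f, ha, hb]
lemma f2 {a : ℕ} (c : ℕ) (ha : 0 < a) : f (a, 0, c, 0) = (a - 1, c, 1, 0) := by simp [f, ha]
lemma f3 (b c : ℕ) : f (0, b, c, 0) = (0, b + 1, 1, 1) := by simp [f]
lemma f4 {c : ℕ} (a b : ℕ) (hc : 1 < c) : f (a, b, c, 1) = (a, b + 1, c / 2, 1) := by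
  simp [f, hc]
lemma f5 {b : ℕ} (a : ℕ) (h : ∃ k, 0 < k ∧ b = 2 ^ k) : f (a, b, 1, 1) = (a + 1, 0, b, 1) := by
  have h' : ∃ k > 0, b = 2 ^ k := by obtain ⟨k, hk, hb⟩ := h; exact ⟨k, hk, hb⟩
  simp [f, h']
lemma f6 {b : ℕ} (a : ℕ) (h : ¬∃ k, 0 < k ∧ b = 2 ^ k) : f (a, b, 1, 1) = (a, b, 1, 0) := by
  have h' : ¬∃ k > 0, b = 2 ^ k := fun ⟨k, hk, hb⟩ => h ⟨k, hk, hb⟩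
  simp [f, h']

/-- Reachability under iteration of `f`. -/
def Reach (x y : ℕ × ℕ × ℕ × ℕ) : Prop := ∃ n, f^[n] x = y

lemma Reach.refl (x : ℕ × ℕ × ℕ × ℕ) : Reach x x := ⟨0, rfl⟩
lemma Reach.trans {x y z} (h1 : Reach x y) (h2 : Reach y z) : Reach x z := by
  obtain ⟨n, hn⟩ := h1; obtain ⟨m, hm⟩ := h2
  exact ⟨m + n, by rw [Function.iterate_add_apply, hn, hm]⟩
lemma Reach.step {x y} (h : f x = y) : Reach x y := ⟨1, h⟩
lemma Reach.iter {x y} (n : ℕ) (h : f^[n] x = y) : Reach x y := ⟨n, h⟩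

/-- Rule-4 chain: halve c, incrementing b. -/
lemma chain4 : ∀ k a b : ℕ, f^[k] (a, b, 2 ^ k, 1) = (a, b + k, 1, 1) := by
  intro k
  induction k with
  | zero => intro a b; simp
  | succ k ih =>
    intro a b
    rw [Function.iterate_succ_apply, f4 a b (by exact Nat.one_lt_two_pow (by omega)),
      show (2:ℕ) ^ (k+1) / 2 = 2 ^ k by rw [pow_succ]; omega]
    rw [ih a (b+1)]; ring_nf
/-- Rule-1 chain: decrement b, doubling c. -/
lemma chain1 : ∀ j a b c : ℕ, 0 < a → f^[j] (a, b + j, c, 0) = (a, b, 2 ^ j * c, 0) := by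
  intro j
  induction j with
  | zero => intro a b c _; simp
  | succ j ih =>
    intro a b c ha
    rw [Function.iterate_succ_apply, f1 c ha (by omega),
      show b + (j+1) - 1 = b + j from rfl]
    rw [ih a b (2*c) ha]
    ring_nf

/-- Iterated exponentiation. -/
def expIter : ℕ → ℕ → ℕ
  | 0, b => b
  | a + 1, b => expIter a (2 ^ b)

lemma expIter_pow (a b : ℕ) : expIter a (2 ^ b) = 2 ^ expIter a b := by
  induction a generalizing b with
  | zero => rfl
  | succ a ih => show expIter a (2 ^ 2 ^ b) = _; rw [ih (2 ^ b)]; rfl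

lemma expIter_succ (a b : ℕ) : expIter (a + 1) b = 2 ^ expIter a b := expIter_pow a b

lemma le_expIter (a b : ℕ) : b ≤ expIter a b := by
  induction a with
  | zero => exact le_refl _
  | succ a ih => rw [expIter_succ]; exact le_trans ih (Nat.le_of_lt Nat.lt_two_pow_self)

/-- Descent: exponentiate a times while decreasing a to 0. -/
lemma descend : ∀ a b : ℕ, 0 < b → Reach (a, b, 1, 0) (0, expIter a b, 1, 0) := by
  intro a
  induction a with
  | zero => intro b _; exact Reach.refl _
  | succ a ih =>
    intro b hb
    have h1 : f^[b] (a + 1, b, 1, 0) = (a + 1, 0, 2 ^ b * 1, 0) := by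
      have := chain1 b (a+1) 0 1 (by omega); simpa using this
    have h2 : Reach (a + 1, b, 1, 0) (a, 2 ^ b, 1, 0) := by
      refine (Reach.iter b h1).trans (Reach.step ?_)
      rw [f2 _ (by omega)]; simp
    exact h2.trans (by simpa [expIter] using ih (2 ^ b) (by positivity))

/-- Increment chain at a = 0, as long as b is never a power of 2. -/
lemma incr : ∀ j b : ℕ, (∀ i < j, ¬∃ k, 0 < k ∧ b + i = 2 ^ k) →
    Reach (0, b, 1, 1) (0, b + j, 1, 1) := by
  intro j
  induction j with
  | zero => intro b _; exact Reach.refl _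
  | succ j ih =>
    intro b hcond
    have h1 : Reach (0, b, 1, 1) (0, b + 1, 1, 1) :=
      (Reach.step (f6 0 (by simpa using hcond 0 (by omega)))).trans (Reach.step (f3 b 1))
    have h2 := ih (b + 1) (fun i hi => by
      have := hcond (i + 1) (by omega)
      simpa [Nat.add_assoc, Nat.add_comm 1 i] using this)
    exact h1.trans (by rw [show b + (j+1) = b + 1 + j by omega]; exact h2)

/-- Key lemma: from (a, b, 1, 1) with b ≥ 2 avoiding towers and a ≥ 1,
    we reach (0, 2 * expIter a b, 1, 1). -/
lemma key : ∀ b : ℕ, 2 ≤ b → (∀ h, b ≠ T h) → ∀ a : ℕ, 1 ≤ a →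
    Reach (a, b, 1, 1) (0, 2 * expIter a b, 1, 1) := by
  intro b
  induction b using Nat.strong_induction_on with
  | _ b IH =>
    intro hb2 hbT a ha
    by_cases hp : ∃ k, 0 < k ∧ b = 2 ^ k
    · obtain ⟨k, hk, rfl⟩ := hp
      have hk2 : 2 ≤ k := by
        rcases Nat.lt_or_ge k 2 with h | h
        · interval_cases k
          · exact absurd (show (2:ℕ)^1 = T 1 from rfl) (hbT 1)
        · exact h
      have hkT : ∀ h, k ≠ T h := by
        intro h hkh
        exact hbT (h + 1) (by rw [hkh]; rfl)
      have hklt : k < 2 ^ k := Nat.lt_two_pow_self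
      have step1 : Reach (a, 2 ^ k, 1, 1) (a + 1, k, 1, 1) := by
        refine (Reach.step (f5 a ⟨k, hk, rfl⟩)).trans (Reach.iter k ?_)
        simpa using chain4 k (a + 1) 0
      have step2 := IH k hklt hk2 hkT (a + 1) (by omega)
      rw [show expIter (a+1) k = expIter a (2 ^ k) from rfl] at step2
      exact step1.trans step2
    · -- b is not a power of 2
      obtain ⟨a', rfl⟩ : ∃ a', a = a' + 1 := ⟨a - 1, by omega⟩
      obtain ⟨e, he⟩ : ∃ e, expIter a' b = e := ⟨_, rfl⟩
      have he2 : 2 ≤ e := he ▸ le_trans hb2 (le_expIter a' b)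
      have hE : expIter (a' + 1) b = 2 ^ e := by rw [expIter_succ, he]
      have step1 : Reach (a' + 1, b, 1, 1) (0, 2 ^ e, 1, 0) := by
        refine (Reach.step (f6 _ hp)).trans ?_
        have := descend (a' + 1) b (by omega)
        rwa [hE] at this
      have step2 : Reach (0, 2 ^ e, 1, 0) (0, 2 ^ e + 1, 1, 1) := Reach.step (f3 _ 1)
      have step3 : Reach (0, 2 ^ e + 1, 1, 1) (0, 2 * 2 ^ e, 1, 1) := by
        have h2e : 2 ≤ 2 ^ e := by
          calc 2 = 2 ^ 1 := rfl
          _ ≤ 2 ^ e := Nat.pow_le_pow_right (by omega) (by omega)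
        have hcond : ∀ i < 2 ^ e - 1, ¬∃ k, 0 < k ∧ 2 ^ e + 1 + i = 2 ^ k := by
          rintro i hi ⟨k, hk, hik⟩
          have hk1 : 2 ^ k < 2 ^ (e + 1) := by rw [← hik, pow_succ]; omega
          have hke : k < e + 1 := (Nat.pow_lt_pow_iff_right (by norm_num)).mp hk1
          have h4 : 2 ^ k ≤ 2 ^ e := Nat.pow_le_pow_right (by omega) (by omega)
          rw [← hik] at h4
          omega
        have := incr (2 ^ e - 1) (2 ^ e + 1) hcond
        rw [show 2 ^ e + 1 + (2 ^ e - 1) = 2 * 2 ^ e by omega] at this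
        exact this
      rw [hE]
      exact (step1.trans step2).trans step3


theorem stmt_3 : ∀ m : ℕ, (∀ h : ℕ, 2 ^ m ≠ T h) →
    ∃ n : ℕ, f^[n] (0, 2 ^ m, 1, 1) = (0, 2 ^ (m + 1), 1, 1) := by
  intro m hm
  have hm2 : 2 ≤ m := by
    rcases Nat.lt_or_ge m 2 with h | h
    · interval_cases m
      · exact absurd (show (2:ℕ)^0 = T 0 from rfl) (hm 0)
      · exact absurd (show (2:ℕ)^1 = T 1 from rfl) (hm 1)
    · exact h
  have hmT : ∀ h, m ≠ T h := fun h hmh => hm (h + 1) (by rw [hmh]; rfl)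
  have step1 : Reach (0, 2 ^ m, 1, 1) (1, m, 1, 1) := by
    refine (Reach.step (f5 0 ⟨m, by omega, rfl⟩)).trans (Reach.iter m ?_)
    simpa using chain4 m 1 0
  have step2 := key m hm2 hmT 1 (le_refl 1)
  have hEx : 2 * expIter 1 m = 2 ^ (m + 1) := by
    show 2 * expIter 0 (2 ^ m) = 2 ^ (m + 1)
    rw [show expIter 0 (2^m) = 2 ^ m from rfl, pow_succ]; ring
  rw [hEx] at step2
  exact step1.trans step2
end

section
/- For every tuple of the form v = (0, 2^m, 1, 1) ∈ V with 2^m ∈ {T(h) : h ≥ 0}, there exists an integer n ≥ 0 such that f^n(v) = (a, 1, 1, 0), where a is the unique natural number with T(a) = 2^m. -/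
lemma f_pow (a b i : ℕ) : f^[i] (a, b, 2 ^ i, 1) = (a, b + i, 1, 1) := by
  induction i generalizing b with
  | zero => simp
  | succ i ih =>
    rw [Function.iterate_succ_apply]
    have h1 : (1 : ℕ) < 2 ^ (i + 1) := Nat.one_lt_two_pow_iff.mpr (by omega)
    have h2 : 2 ^ (i + 1) / 2 = 2 ^ i := by
      rw [pow_succ, Nat.mul_div_cancel _ (by norm_num)]
    simp only [f, if_neg (by norm_num : ¬(1:ℕ) = 0), if_pos h1, h2]
    rw [ih (b + 1)]
    ring_nf

lemma f_one (a : ℕ) : f (a, 1, 1, 1) = (a, 1, 1, 0) := by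
  have : ¬∃ k > 0, (1 : ℕ) = 2 ^ k := by
    rintro ⟨k, hk, e⟩
    have := Nat.one_lt_two_pow_iff.mpr (by omega : k ≠ 0)
    omega
  simp [f, this]

lemma f_split (a k : ℕ) (hk : 0 < k) : f (a, 2 ^ k, 1, 1) = (a + 1, 0, 2 ^ k, 1) := by
  have : ∃ k' > 0, (2:ℕ) ^ k = 2 ^ k' := ⟨k, hk, rfl⟩
  simp [f, this]
  omega

lemma T_pos (a : ℕ) : 0 < T a := by
  induction a with
  | zero => simp [T]
  | succ a ih => exact (Nat.pow_pos (by norm_num : 0 < 2) : 0 < 2 ^ T a)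

lemma main (a : ℕ) : ∀ j : ℕ, ∃ n : ℕ, f^[n] (j, T a, 1, 1) = (j + a, 1, 1, 0) := by
  induction a with
  | zero => intro j; exact ⟨1, by simpa [T] using f_one j⟩
  | succ a ih =>
    intro j
    obtain ⟨n, hn⟩ := ih (j + 1)
    refine ⟨n + (T a + 1), ?_⟩
    rw [Function.iterate_add_apply, Function.iterate_add_apply,
      Function.iterate_one, show T (a+1) = 2 ^ T a from rfl,
      f_split j (T a) (T_pos a), f_pow (j+1) 0 (T a), Nat.zero_add, hn]
    ring_nf

theorem stmt_4 : ∀ m a : ℕ, T a = 2 ^ m →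
    ∃ n : ℕ, f^[n] (0, 2 ^ m, 1, 1) = (a, 1, 1, 0) := by
  intro m a h
  obtain ⟨n, hn⟩ := main a 0
  rw [h, Nat.zero_add] at hn
  exact ⟨n, hn⟩
end

section
/- The structure (V; f) is isomorphic to (ℕ; S), where S is the successor function: there exists a bijection τ : V → ℕ such that τ(f(v)) = τ(v) + 1 for all v ∈ V, and τ(0,0,1,1) = 0. -/
namespace Stmt8

lemma f1 (a b c : ℕ) (ha : 0 < a) (hb : 0 < b) : f (a, b, c, 0) = (a, b-1, 2*c, 0) := by
  simp only [f]; simp [ha, hb]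
lemma f2 (a c : ℕ) (ha : 0 < a) : f (a, 0, c, 0) = (a-1, c, 1, 0) := by
  simp only [f]; simp [ha]
lemma f3 (b c : ℕ) : f (0, b, c, 0) = (0, b+1, 1, 1) := by
  simp only [f]; simp
lemma f4 (a b c : ℕ) (hc : 1 < c) : f (a, b, c, 1) = (a, b+1, c/2, 1) := by
  simp only [f]; simp [hc]
lemma f5 (a b : ℕ) (h : ∃ k > 0, b = 2^k) : f (a, b, 1, 1) = (a+1, 0, b, 1) := by
  simp only [f]; simp [h]
lemma f6 (a b : ℕ) (h : ¬ ∃ k > 0, b = 2^k) : f (a, b, 1, 1) = (a, b, 1, 0) := by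
  simp only [f]; simp [h]

open Classical in
/-- Left inverse of `f` on `V`. -/
noncomputable def g : ℕ × ℕ × ℕ × ℕ → ℕ × ℕ × ℕ × ℕ :=
  fun ⟨a, b, c, d⟩ =>
    if d = 0 then
      if 2 ≤ c then (a, b + 1, c / 2, 0)
      else if ∃ k > 0, b = 2 ^ k then (a + 1, 0, b, 0)
      else (a, b, 1, 1)
    else
      if b = 0 then (a - 1, c, 1, 1)
      else if a = 0 then (0, b - 1, 1, 0)
      else (a, b - 1, 2 * c, 1)

lemma g1 (a b c : ℕ) (hc : 2 ≤ c) : g (a, b, c, 0) = (a, b+1, c/2, 0) := by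
  simp only [g]; simp [hc]
lemma g2 (a b : ℕ) (h : ∃ k > 0, b = 2^k) : g (a, b, 1, 0) = (a+1, 0, b, 0) := by
  simp only [g]; simp [h]
lemma g3 (a b : ℕ) (h : ¬ ∃ k > 0, b = 2^k) : g (a, b, 1, 0) = (a, b, 1, 1) := by
  simp only [g]; simp [h]
lemma g5 (a c : ℕ) : g (a, 0, c, 1) = (a-1, c, 1, 1) := by
  simp only [g]; simp
lemma g4 (a b c : ℕ) (ha : a ≠ 0) (hb : b ≠ 0) : g (a, b, c, 1) = (a, b-1, 2*c, 1) := by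
  simp only [g]; simp [ha, hb]
lemma g6 (b c : ℕ) (hb : b ≠ 0) : g (0, b, c, 1) = (0, b-1, 1, 0) := by
  simp only [g]; simp [hb]

lemma pow_not_lt (k : ℕ) (h : ¬ 1 < (2:ℕ)^k) : (2:ℕ)^k = 1 := by
  have := Nat.one_le_two_pow (n := k); omega

lemma pow_half (k : ℕ) (hk : 1 ≤ k) : (2:ℕ)^k / 2 = 2^(k-1) := by
  have : (2:ℕ)^k = 2 * 2^(k-1) := by
    rw [← pow_succ']
    congr 1; omega
  omega

lemma inV_def (a b c d : ℕ) : inV (a,b,c,d) ↔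
    (∃ k, c = 2 ^ k) ∧ (d = 0 ∨ d = 1) ∧ (a > 0 → b = 0 → c > 1) ∧ (a = 0 → c = 1) :=
  Iff.rfl

/-- f maps V into V. -/
lemma fV : ∀ v, inV v → inV (f v) := by
  rintro ⟨a, b, c, d⟩ ⟨⟨k, rfl⟩, hd, h2, h3⟩
  rcases hd with rfl | rfl
  · rcases Nat.eq_zero_or_pos a with rfl | ha
    · rw [f3]; exact ⟨⟨0, rfl⟩, Or.inr rfl, by omega, fun _ => rfl⟩
    · rcases Nat.eq_zero_or_pos b with rfl | hb
      · have hc := h2 ha rfl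
        rw [f2 _ _ ha]
        exact ⟨⟨0, rfl⟩, Or.inl rfl, fun _ h => by omega, fun _ => rfl⟩
      · rw [f1 _ _ _ ha hb]
        have : 2 * 2^k = 2^(k+1) := by rw [pow_succ]; ring
        refine ⟨⟨k+1, this⟩, Or.inl rfl, fun _ _ => ?_, fun h => by omega⟩
        have := Nat.one_le_two_pow (n := k); omega
  · by_cases hc : 1 < (2:ℕ)^k
    · rw [f4 _ _ _ hc]
      have hk : 1 ≤ k := by by_contra h; interval_cases k <;> omega
      rw [pow_half k hk]
      have ha : a ≠ 0 := fun h => by have := h3 h; omega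
      exact ⟨⟨k-1, rfl⟩, Or.inr rfl, by omega, fun h => absurd h ha⟩
    · have hc1 : (2:ℕ)^k = 1 := pow_not_lt k hc
      rw [hc1]
      by_cases hp : ∃ j > 0, b = 2 ^ j
      · rw [f5 _ _ hp]
        obtain ⟨j, hj, rfl⟩ := hp
        have h2j : (2:ℕ) ≤ 2^j := by
          calc (2:ℕ) = 2^1 := rfl
          _ ≤ 2^j := Nat.pow_le_pow_right (by omega) hj
        exact ⟨⟨j, rfl⟩, Or.inr rfl, fun _ _ => by omega, fun h => by omega⟩
      · rw [f6 _ _ hp]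
        refine ⟨⟨0, rfl⟩, Or.inl rfl, fun ha hb => ?_, fun _ => rfl⟩
        have := h2 ha hb; omega

/-- g is a left inverse of f on V. -/
lemma gf : ∀ v, inV v → g (f v) = v := by
  rintro ⟨a, b, c, d⟩ ⟨⟨k, rfl⟩, hd, h2, h3⟩
  rcases hd with rfl | rfl
  · rcases Nat.eq_zero_or_pos a with rfl | ha
    · have hc1 : (2:ℕ)^k = 1 := h3 rfl
      rw [f3, g6 _ _ (by omega), hc1]
      simp only [Prod.mk.injEq, true_and, and_true]; omega
    · rcases Nat.eq_zero_or_pos b with rfl | hb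
      · have hc := h2 ha rfl
        have hk : 1 ≤ k := by by_contra h; interval_cases k <;> omega
        rw [f2 _ _ ha, g2 _ _ ⟨k, hk, rfl⟩]
        simp only [Prod.mk.injEq, true_and, and_true]; omega
      · rw [f1 _ _ _ ha hb, g1 _ _ _ (by have := Nat.one_le_two_pow (n := k); omega)]
        simp only [Prod.mk.injEq, true_and, and_true]; omega
  · by_cases hc : 1 < (2:ℕ)^k
    · have hk : 1 ≤ k := by by_contra h; interval_cases k <;> omega
      have ha : a ≠ 0 := fun h => by have := h3 h; omega
      rw [f4 _ _ _ hc, g4 _ _ _ ha (by omega), pow_half k hk]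
      have h5 : 2 * 2^(k-1) = 2^k := by
        rw [← pow_succ']; congr 1; omega
      rw [h5]
      simp only [Prod.mk.injEq, true_and, and_true]; omega
    · have hc1 : (2:ℕ)^k = 1 := pow_not_lt k hc
      rw [hc1]
      by_cases hp : ∃ j > 0, b = 2 ^ j
      · rw [f5 _ _ hp, g5]
        simp only [Prod.mk.injEq, true_and, and_true]; omega
      · rw [f6 _ _ hp, g3 _ _ hp]

lemma one_not_pow : ¬ ∃ j > 0, (1:ℕ) = 2 ^ j := by
  rintro ⟨j, hj, h⟩
  have : (2:ℕ) ≤ 2^j := by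
    calc (2:ℕ) = 2^1 := rfl
    _ ≤ 2^j := Nat.pow_le_pow_right (by omega) hj
  omega

lemma not_v0 : ∀ v, inV v → f v ≠ (0, 0, 1, 1) := by
  intro v hv h
  have hg := gf v hv
  rw [h] at hg
  rw [g5] at hg
  rw [← hg] at h
  rw [f6 _ _ one_not_pow] at h
  simp at h

/-- The orbit of (0,0,1,1) under f. -/
noncomputable def sig : ℕ → ℕ × ℕ × ℕ × ℕ
  | 0 => (0, 0, 1, 1)
  | n + 1 => f (sig n)

lemma sig_mem : ∀ n, inV (sig n) := by
  intro n; induction n with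
  | zero => exact ⟨⟨0, rfl⟩, Or.inr rfl, by omega, fun _ => rfl⟩
  | succ n ih => exact fV _ ih

lemma sig_inj : Function.Injective sig := by
  intro m
  induction m with
  | zero =>
    intro n h
    cases n with
    | zero => rfl
    | succ n => exact absurd h.symm (not_v0 (sig n) (sig_mem n))
  | succ m ih =>
    intro n h
    cases n with
    | zero => exact absurd h (not_v0 (sig m) (sig_mem m))
    | succ n =>
      have : sig m = sig n := by
        have h1 := gf (sig m) (sig_mem m)
        have h2 := gf (sig n) (sig_mem n)
        rw [← h1, ← h2]
        show g (sig (m+1)) = g (sig (n+1))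
        rw [h]
      rw [ih this]

/-- climbing phase: rule 4 repeatedly. -/
lemma up (k a n : ℕ) (hn : sig n = (a, 0, 2^k, 1)) :
    ∀ i ≤ k, sig (n + i) = (a, i, 2^(k-i), 1) := by
  intro i
  induction i with
  | zero => intro _; simpa using hn
  | succ i ih =>
    intro hik
    have hi : i ≤ k := by omega
    have h := ih hi
    have hlt : 1 < (2:ℕ)^(k-i) := by
      have : 1 ≤ k - i := by omega
      calc (1:ℕ) < 2^1 := by omega
      _ ≤ 2^(k-i) := Nat.pow_le_pow_right (by omega) this
    show f (sig (n + i)) = _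
    rw [h, f4 _ _ _ hlt, pow_half _ (by omega)]
    have e : k - i - 1 = k - (i + 1) := by omega
    rw [e]

/-- descending phase: rule 1 repeatedly. -/
lemma down (k a n : ℕ) (ha : 0 < a) (hn : sig n = (a, k, 1, 0)) :
    ∀ i ≤ k, sig (n + i) = (a, k - i, 2^i, 0) := by
  intro i
  induction i with
  | zero => intro _; simpa using hn
  | succ i ih =>
    intro hik
    have hi : i ≤ k := by omega
    have h := ih hi
    show f (sig (n + i)) = _
    rw [h, f1 _ _ _ ha (by omega)]
    have : 2 * 2^i = 2^(i+1) := by rw [pow_succ]; ring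
    rw [this]
    have e : k - i - 1 = k - (i + 1) := by omega
    rw [e]

/-- Key termination lemma: a climb from (a,0,2^k,1) eventually reaches (a,0,2^k,0). -/
lemma climb : ∀ k, 1 ≤ k → ∀ a n, 1 ≤ a → sig n = (a, 0, 2^k, 1) →
    ∃ m, sig m = (a, 0, 2^k, 0) := by
  intro k
  induction k using Nat.strong_induction_on with
  | _ k ih =>
    intro hk a n ha hn
    have htop : sig (n + k) = (a, k, 1, 1) := by
      have := up k a n hn k le_rfl
      simpa using this
    by_cases hp : ∃ j > 0, k = 2 ^ j
    · obtain ⟨j, hj, hkj⟩ := hp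
      have h1 : sig (n + k + 1) = (a + 1, 0, 2^j, 1) := by
        show f (sig (n + k)) = _
        rw [htop, f5 _ _ ⟨j, hj, hkj⟩, hkj]
      have hjk : j < k := by
        have := Nat.lt_two_pow_self (n := j)
        omega
      obtain ⟨m, hm⟩ := ih j hjk hj (a + 1) (n + k + 1) (by omega) h1
      have h2 : sig (m + 1) = (a, k, 1, 0) := by
        show f (sig m) = _
        rw [hm, f2 _ _ (by omega), hkj]
        simp only [Prod.mk.injEq, true_and, and_true]; omega
      have h3 := down k a (m+1) ha h2 k le_rfl
      simp only [Nat.sub_self] at h3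
      exact ⟨m + 1 + k, h3⟩
    · have h1 : sig (n + k + 1) = (a, k, 1, 0) := by
        show f (sig (n + k)) = _
        rw [htop, f6 _ _ hp]
      have h3 := down k a (n + k + 1) ha h1 k le_rfl
      simp only [Nat.sub_self] at h3
      exact ⟨n + k + 1 + k, h3⟩

/-- From (0,b,1,1) we reach (0,b,1,0). -/
lemma step0 (b n : ℕ) (hn : sig n = (0, b, 1, 1)) : ∃ m, sig m = (0, b, 1, 0) := by
  by_cases hp : ∃ j > 0, b = 2 ^ j
  · obtain ⟨j, hj, hbj⟩ := hp
    have h1 : sig (n + 1) = (1, 0, 2^j, 1) := by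
      show f (sig n) = _
      rw [hn, f5 _ _ ⟨j, hj, hbj⟩, hbj]
    obtain ⟨m, hm⟩ := climb j hj 1 (n + 1) le_rfl h1
    refine ⟨m + 1, ?_⟩
    show f (sig m) = _
    rw [hm, f2 _ _ (by omega), hbj]
  · refine ⟨n + 1, ?_⟩
    show f (sig n) = _
    rw [hn, f6 _ _ hp]

lemma reach0 : ∀ b, ∃ n, sig n = (0, b, 1, 1) := by
  intro b
  induction b with
  | zero => exact ⟨0, rfl⟩
  | succ b ih =>
    obtain ⟨n, hn⟩ := ih
    obtain ⟨m, hm⟩ := step0 b n hn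
    refine ⟨m + 1, ?_⟩
    show f (sig m) = _
    rw [hm, f3]

lemma reachA : ∀ a, 1 ≤ a → ∀ k, 1 ≤ k → ∃ n, sig n = (a, 0, 2^k, 1) := by
  intro a
  induction a with
  | zero => omega
  | succ a ih =>
    intro _ k hk
    rcases Nat.eq_zero_or_pos a with rfl | ha
    · obtain ⟨n, hn⟩ := reach0 (2^k)
      refine ⟨n + 1, ?_⟩
      show f (sig n) = _
      rw [hn, f5 _ _ ⟨k, hk, rfl⟩]
    · obtain ⟨n, hn⟩ := ih ha (2^k) (Nat.one_le_two_pow)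
      have htop : sig (n + 2^k) = (a, 2^k, 1, 1) := by
        have := up (2^k) a n hn (2^k) le_rfl
        simpa using this
      refine ⟨n + 2^k + 1, ?_⟩
      show f (sig (n + 2^k)) = _
      rw [htop, f5 _ _ ⟨k, hk, rfl⟩]

lemma reachTop : ∀ a k, 1 ≤ a → 1 ≤ k → ∃ m, sig m = (a, k, 1, 0) := by
  intro a k ha hk
  by_cases hp : ∃ j > 0, k = 2 ^ j
  · obtain ⟨j, hj, hkj⟩ := hp
    obtain ⟨n, hn⟩ := reachA (a + 1) (by omega) j hj
    obtain ⟨m, hm⟩ := climb j hj (a + 1) n (by omega) hn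
    refine ⟨m + 1, ?_⟩
    show f (sig m) = _
    rw [hm, f2 _ _ (by omega), hkj]
    simp only [Prod.mk.injEq, true_and, and_true]; omega
  · obtain ⟨n, hn⟩ := reachA a ha k hk
    have htop : sig (n + k) = (a, k, 1, 1) := by
      have := up k a n hn k le_rfl
      simpa using this
    refine ⟨n + k + 1, ?_⟩
    show f (sig (n + k)) = _
    rw [htop, f6 _ _ hp]

/-- Surjectivity onto V. -/
lemma sig_surj : ∀ v, inV v → ∃ n, sig n = v := by
  rintro ⟨a, b, c, d⟩ ⟨⟨k, rfl⟩, hd, h2, h3⟩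
  rcases hd with rfl | rfl
  · -- d = 0
    rcases Nat.eq_zero_or_pos a with rfl | ha
    · have hc1 : (2:ℕ)^k = 1 := h3 rfl
      rw [hc1]
      obtain ⟨n, hn⟩ := reach0 b
      exact step0 b n hn
    · have hK : 1 ≤ b + k := by
        rcases Nat.eq_zero_or_pos b with rfl | hb
        · have := h2 ha rfl
          by_contra h
          have : k = 0 := by omega
          subst this; simp at this
        · omega
      obtain ⟨n, hn⟩ := reachTop a (b + k) ha hK
      have h := down (b + k) a n ha hn k (by omega)
      refine ⟨n + k, ?_⟩
      rw [h]
      have e : b + k - k = b := by omega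
      rw [e]
  · -- d = 1
    rcases Nat.eq_zero_or_pos a with rfl | ha
    · have hc1 : (2:ℕ)^k = 1 := h3 rfl
      rw [hc1]
      exact reach0 b
    · have hK : 1 ≤ b + k := by
        rcases Nat.eq_zero_or_pos b with rfl | hb
        · have := h2 ha rfl
          by_contra h
          have : k = 0 := by omega
          subst this; simp at this
        · omega
      obtain ⟨n, hn⟩ := reachA a ha (b + k) hK
      have h := up (b + k) a n hn b (by omega)
      refine ⟨n + b, ?_⟩
      rw [h]
      have e : b + k - b = k := by omega
      rw [e]

end Stmt8

theorem stmt_8 : ∃ τ : ℕ × ℕ × ℕ × ℕ → ℕ,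
    Set.BijOn τ {v | inV v} Set.univ ∧
    (∀ v, inV v → τ (f v) = τ v + 1) ∧
    τ (0, 0, 1, 1) = 0 := by
  open Stmt8 in
  refine ⟨Function.invFun sig, ⟨fun v _ => trivial, ?_, ?_⟩, ?_, ?_⟩
  · intro v hv w hw h
    obtain ⟨n, rfl⟩ := sig_surj v hv
    obtain ⟨m, rfl⟩ := sig_surj w hw
    rw [Function.leftInverse_invFun sig_inj n, Function.leftInverse_invFun sig_inj m] at h
    rw [h]
  · intro n _
    exact ⟨sig n, sig_mem n, Function.leftInverse_invFun sig_inj n⟩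
  · intro v hv
    obtain ⟨n, rfl⟩ := sig_surj v hv
    have : f (sig n) = sig (n + 1) := rfl
    rw [this, Function.leftInverse_invFun sig_inj (n+1), Function.leftInverse_invFun sig_inj n]
  · have : (0, 0, 1, 1) = sig 0 := rfl
    rw [this, Function.leftInverse_invFun sig_inj 0]
end

section
/- For every m ≥ 1, any trajectory of f from (m,1,1,0) to (m+1,1,1,0) takes at least T(m-1) steps: if f^ℓ(m,1,1,0) = (m+1,1,1,0) for ℓ > 0, then ℓ ≥ T(m-1). -/
lemma f_rule1 (a b c : ℕ) (ha : 0 < a) (hb : 0 < b) :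
    f (a, b, c, 0) = (a, b - 1, 2 * c, 0) := by
  simp [f, ha, hb]

lemma f_rule2 (a c : ℕ) (ha : 0 < a) :
    f (a, 0, c, 0) = (a - 1, c, 1, 0) := by
  simp [f, ha]

lemma iter_rule1 (a c : ℕ) (ha : 0 < a) :
    ∀ i b, i ≤ b → f^[i] (a, b, c, 0) = (a, b - i, 2 ^ i * c, 0) := by
  intro i
  induction i with
  | zero => intro b _; simp
  | succ n ih =>
      intro b hb
      rw [Function.iterate_succ_apply', ih b (by omega)]
      rw [f_rule1 a (b - n) (2 ^ n * c) ha (by omega)]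
      have h1 : b - n - 1 = b - (n + 1) := by omega
      have h2 : 2 * (2 ^ n * c) = 2 ^ (n + 1) * c := by ring
      rw [h1, h2]

lemma phase (a b c : ℕ) (ha : 0 < a) :
    f^[b + 1] (a, b, c, 0) = (a - 1, 2 ^ b * c, 1, 0) := by
  rw [Function.iterate_succ_apply', iter_rule1 a c ha b b le_rfl]
  simp [f_rule2 a (2 ^ b * c) ha]

/-- Partial sums of (T k + 1): the step counts between checkpoints. -/
def S : ℕ → ℕ
  | 0 => 0
  | k + 1 => S k + (T k + 1)

lemma checkpoint (m : ℕ) : ∀ k, k ≤ m → f^[S k] (m, 1, 1, 0) = (m - k, T k, 1, 0) := by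
  intro k
  induction k with
  | zero => intro _; simp [S, T]
  | succ n ih =>
      intro hn
      have hS : S (n + 1) = (T n + 1) + S n := by simp [S]; omega
      rw [hS, Function.iterate_add_apply, ih (by omega)]
      rw [phase (m - n) (T n) 1 (by omega)]
      have h1 : m - n - 1 = m - (n + 1) := by omega
      have h2 : 2 ^ T n * 1 = T (n + 1) := by simp [T]
      rw [h1, h2]

lemma decompose (m : ℕ) : ∀ j, j < S m → ∃ k, k < m ∧ ∃ i, i ≤ T k ∧ j = S k + i := by
  induction m with
  | zero => intro j hj; simp [S] at hj
  | succ n ih =>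
      intro j hj
      by_cases h : j < S n
      · obtain ⟨k, hk, i, hi, hji⟩ := ih j h
        exact ⟨k, by omega, i, hi, hji⟩
      · have hS : S (n + 1) = S n + (T n + 1) := rfl
        exact ⟨n, by omega, j - S n, by omega, by omega⟩

lemma first_coord_le (m : ℕ) : ∀ j, j < S m → (f^[j] (m, 1, 1, 0)).1 ≤ m := by
  intro j hj
  obtain ⟨k, hk, i, hi, rfl⟩ := decompose m j hj
  rw [add_comm, Function.iterate_add_apply, checkpoint m k (by omega)]
  rw [iter_rule1 (m - k) 1 (by omega) i (T k) hi]
  simp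

theorem stmt_9 : ∀ m : ℕ, 1 ≤ m → ∀ ℓ : ℕ, 0 < ℓ →
    f^[ℓ] (m, 1, 1, 0) = (m + 1, 1, 1, 0) → T (m - 1) ≤ ℓ := by
  intro m hm ℓ hℓ hiter
  have hge : S m ≤ ℓ := by
    by_contra h
    have := first_coord_le m ℓ (by omega)
    rw [hiter] at this
    simp at this
  obtain ⟨n, rfl⟩ : ∃ n, m = n + 1 := ⟨m - 1, by omega⟩
  have hS : S (n + 1) = S n + (T n + 1) := rfl
  have : T n ≤ S (n + 1) := by omega
  simpa using le_trans this hge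
end
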